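/- (Generator Lemma, second part) Let G be a finite group and C = (C_1,…,C_{2u}) a 2u-tuple of conjugacy classes of G. Suppose that for every tuple (g_1,…,g_u) ∈ G^u with [g_1,…,g_u] ∈ ni(G,C) and every i ∈ {1,…,u}, the elements g_1,…,g_{i−1},g_{i+1},…,g_u already generate G. Then any two tuples of the form [g_1,…,g_u] lying in ni(G,C) are braid equivalent; i.e., all H-M representatives of ni(G,C) fall in one braid orbit. -/

import Mathlib

/-- Elementary braid move: replace adjacent entries `(a, b)` by `(a * b * a⁻¹, a)`. -/
def BraidMove {G : Type*} [Group G] (x y : List G) : Prop :=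
  ∃ (l₁ l₂ : List G) (a b : G),
    x = l₁ ++ a :: b :: l₂ ∧ y = l₁ ++ (a * b * a⁻¹) :: a :: l₂

/-- Braid equivalence: the equivalence relation generated by elementary braid moves. -/
def BraidEquiv {G : Type*} [Group G] : List G → List G → Prop :=
  Relation.EqvGen BraidMove

/-- The bracket tuple `[g_1, …, g_u] = (g_1, …, g_u, g_u⁻¹, …, g_1⁻¹)`. -/
def hmBracket {G : Type*} [Group G] (l : List G) : List G :=
  l ++ l.reverse.map (fun x => x⁻¹)

/-- The Nielsen class `ni(G, C)` for a tuple `C` of conjugacy classes of `G`: tuples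
with product 1, generating `G`, whose entries represent the classes `C` in some order. -/
def NielsenC {G : Type*} [Group G] (C : List (ConjClasses G)) (l : List G) : Prop :=
  l.prod = 1 ∧ Subgroup.closure {x | x ∈ l} = ⊤ ∧ (l.map ConjClasses.mk).Perm C

namespace BraidAux
variable {G : Type*} [Group G]

theorem be_refl (x : List G) : BraidEquiv x x := Relation.EqvGen.refl x
theorem be_symm {x y : List G} (h : BraidEquiv x y) : BraidEquiv y x := Relation.EqvGen.symm _ _ h
theorem be_trans {x y z : List G} (h : BraidEquiv x y) (h' : BraidEquiv y z) : BraidEquiv x z :=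
  Relation.EqvGen.trans _ _ _ h h'
theorem be_of_move {x y : List G} (h : BraidMove x y) : BraidEquiv x y := Relation.EqvGen.rel _ _ h

theorem move (p q : List G) (a b : G) :
    BraidEquiv (p ++ a :: b :: q) (p ++ (a * b * a⁻¹) :: a :: q) :=
  be_of_move ⟨p, q, a, b, rfl, rfl⟩

theorem appendCong (p q : List G) {x y : List G} (h : BraidEquiv x y) :
    BraidEquiv (p ++ x ++ q) (p ++ y ++ q) := by
  induction h with
  | rel a b hab =>
    obtain ⟨l₁, l₂, c, d, h1, h2⟩ := hab
    exact be_of_move ⟨p ++ l₁, l₂ ++ q, c, d, by simp [h1], by simp [h2]⟩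
  | refl a => exact be_refl _
  | symm a b _ ih => exact be_symm ih
  | trans a b c _ _ ih1 ih2 => exact be_trans ih1 ih2

/-- slide pair `(a,a⁻¹)` left over `b`, no conjugation. -/
theorem S1 (p q : List G) (a b : G) :
    BraidEquiv (p ++ a :: a⁻¹ :: b :: q) (p ++ b :: a :: a⁻¹ :: q) := by
  have h1 : BraidEquiv (p ++ a :: a⁻¹ :: b :: q) (p ++ a :: (a⁻¹ * b * a) :: a⁻¹ :: q) := by
    have := move (p ++ [a]) q a⁻¹ b
    rw [show a⁻¹ * b * a⁻¹⁻¹ = a⁻¹ * b * a by group] at this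
    simpa [List.append_assoc] using this
  have h2 : BraidEquiv (p ++ a :: (a⁻¹ * b * a) :: a⁻¹ :: q) (p ++ b :: a :: a⁻¹ :: q) := by
    have := move p (a⁻¹ :: q) a (a⁻¹ * b * a)
    rwa [show a * (a⁻¹ * b * a) * a⁻¹ = b by group] at this
  exact be_trans h1 h2

/-- slide pair `(a,a⁻¹)` right over `b`, conjugating by `b`. -/
theorem S2 (p q : List G) (a b : G) :
    BraidEquiv (p ++ b :: a :: a⁻¹ :: q) (p ++ (b*a*b⁻¹) :: (b*a*b⁻¹)⁻¹ :: b :: q) := by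
  have h1 := move p (a⁻¹ :: q) b a
  have h2 : BraidEquiv (p ++ (b*a*b⁻¹) :: b :: a⁻¹ :: q)
      (p ++ (b*a*b⁻¹) :: (b*a*b⁻¹)⁻¹ :: b :: q) := by
    have := move (p ++ [b*a*b⁻¹]) q b a⁻¹
    rw [show b * a⁻¹ * b⁻¹ = (b*a*b⁻¹)⁻¹ by group] at this
    simpa [List.append_assoc] using this
  exact be_trans h1 h2

/-- the pair slides left over a whole list, no conjugation. -/
theorem slideBlock (q : List G) (a : G) : ∀ (m p : List G),
    BraidEquiv (p ++ m ++ a :: a⁻¹ :: q) (p ++ a :: a⁻¹ :: (m ++ q)) := by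
  intro m
  induction m with
  | nil => intro p; simpa using be_refl (p ++ a :: a⁻¹ :: q)
  | cons b m ih =>
    intro p
    have h1 : BraidEquiv (p ++ (b :: m) ++ a :: a⁻¹ :: q)
        (p ++ b :: a :: a⁻¹ :: (m ++ q)) := by
      have := ih (p ++ [b])
      simpa [List.append_assoc] using this
    have h2 := be_symm (S1 p (m ++ q) a b)
    exact be_trans h1 h2

/-- conjugate the pair in place by an element `y` of the left context. -/
theorem conjGen (p₁ p₂ q : List G) (y a : G) :
    BraidEquiv (p₁ ++ [y] ++ p₂ ++ a :: a⁻¹ :: q)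
      (p₁ ++ [y] ++ p₂ ++ (y*a*y⁻¹) :: (y*a*y⁻¹)⁻¹ :: q) := by
  have h1 : BraidEquiv (p₁ ++ [y] ++ p₂ ++ a :: a⁻¹ :: q)
      (p₁ ++ y :: a :: a⁻¹ :: (p₂ ++ q)) := by
    have := slideBlock q a p₂ (p₁ ++ [y])
    simpa [List.append_assoc] using this
  have h2 := S2 p₁ (p₂ ++ q) a y
  have h3 := S1 p₁ (p₂ ++ q) (y*a*y⁻¹) y
  have h4 : BraidEquiv (p₁ ++ [y] ++ p₂ ++ (y*a*y⁻¹) :: (y*a*y⁻¹)⁻¹ :: q)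
      (p₁ ++ y :: (y*a*y⁻¹) :: (y*a*y⁻¹)⁻¹ :: (p₂ ++ q)) := by
    have := slideBlock q (y*a*y⁻¹) p₂ (p₁ ++ [y])
    simpa [List.append_assoc] using this
  exact be_trans h1 (be_trans h2 (be_trans h3 (be_symm h4)))

/-- conjugate the pair in place by any element of the subgroup generated by
the left context. -/
theorem travel (p q : List G) {x : G} (hx : x ∈ Subgroup.closure {z | z ∈ p}) : ∀ (a : G),
    BraidEquiv (p ++ a :: a⁻¹ :: q) (p ++ (x*a*x⁻¹) :: (x*a*x⁻¹)⁻¹ :: q) := by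
  induction hx using Subgroup.closure_induction with
  | mem y hy =>
    intro a
    obtain ⟨p₁, p₂, rfl⟩ := List.append_of_mem hy
    have := conjGen p₁ p₂ q y a
    simpa [List.append_assoc] using this
  | one => intro a; simpa using be_refl (p ++ a :: a⁻¹ :: q)
  | mul x y hx hy ihx ihy =>
    intro a
    have h1 := ihy a
    have h2 := ihx (y*a*y⁻¹)
    rw [show x*(y*a*y⁻¹)*x⁻¹ = (x*y)*a*(x*y)⁻¹ by group] at h2
    exact be_trans h1 h2
  | inv x hx ih =>
    intro a
    have h := ih (x⁻¹*a*x)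
    rw [show x*(x⁻¹*a*x)*x⁻¹ = a by group] at h
    rw [inv_inv x]
    exact be_symm h

/-- rotation with conjugation by the product. -/
theorem rotAux : ∀ (s : List G) (b : G),
    BraidEquiv (b :: s) (s ++ [s.prod⁻¹ * b * s.prod]) := by
  intro s
  induction s with
  | nil => intro b; simpa using be_refl [b]
  | cons c s ih =>
    intro b
    have h1 : BraidEquiv (b :: c :: s) (c :: (c⁻¹ * b * c) :: s) := by
      have := move ([] : List G) s c (c⁻¹ * b * c)
      rw [show c * (c⁻¹ * b * c) * c⁻¹ = b by group] at this
      exact be_symm (by simpa using this)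
    have h2 : BraidEquiv (c :: (c⁻¹ * b * c) :: s)
        (c :: (s ++ [s.prod⁻¹ * (c⁻¹ * b * c) * s.prod])) := by
      have := appendCong [c] [] (ih (c⁻¹ * b * c))
      simpa using this
    refine be_trans h1 (be_trans h2 ?_)
    have : s.prod⁻¹ * (c⁻¹ * b * c) * s.prod = (c :: s).prod⁻¹ * b * (c :: s).prod := by
      rw [List.prod_cons]; group
    rw [this]
    simpa using be_refl _

/-- rotation for tuples with product 1. -/
theorem rotOne (s : List G) (b : G) (h : (b :: s).prod = 1) :
    BraidEquiv (b :: s) (s ++ [b]) := by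
  have hs : s.prod = b⁻¹ := by
    rw [List.prod_cons] at h
    exact (eq_inv_of_mul_eq_one_right h)
  have := rotAux s b
  rw [hs, show b⁻¹⁻¹ * b * b⁻¹ = b by group] at this
  exact this

/-! ### hmBracket lemmas -/

def rinv (l : List G) : List G := l.reverse.map (fun x => x⁻¹)

theorem hm_eq (l : List G) : hmBracket l = l ++ rinv l := rfl

@[simp] theorem rinv_nil : rinv ([] : List G) = [] := rfl
@[simp] theorem rinv_append (l m : List G) : rinv (l ++ m) = rinv m ++ rinv l := by
  simp [rinv]
@[simp] theorem rinv_singleton (a : G) : rinv [a] = [a⁻¹] := rfl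
@[simp] theorem rinv_cons (a : G) (l : List G) : rinv (a :: l) = rinv l ++ [a⁻¹] := by
  simp [rinv]

theorem rinv_prod (l : List G) : (rinv l).prod = l.prod⁻¹ := by
  rw [rinv, List.prod_inv_reverse, List.map_reverse]

theorem hm_prod (l : List G) : (hmBracket l).prod = 1 := by
  rw [hm_eq, List.prod_append, rinv_prod, mul_inv_cancel]

theorem hm_append_single (p : List G) (a : G) :
    hmBracket (p ++ [a]) = p ++ a :: a⁻¹ :: rinv p := by
  rw [hm_eq]; simp

/-! ### half-list operations -/

/-- `HR l m` : the brackets are braid equivalent. -/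
def HR (l m : List G) : Prop := BraidEquiv (hmBracket l) (hmBracket m)

theorem hr_refl (l : List G) : HR l l := be_refl _
theorem hr_symm {l m : List G} (h : HR l m) : HR m l := be_symm h
theorem hr_trans {l m k : List G} (h : HR l m) (h' : HR m k) : HR l k := be_trans h h'

/-- op2 : flip the last entry. -/
theorem hr_flip (p : List G) (a : G) : HR (p ++ [a]) (p ++ [a⁻¹]) := by
  unfold HR
  rw [hm_append_single, hm_append_single]
  have := move p (rinv p) a a⁻¹
  rw [show a * a⁻¹ * a⁻¹ = a⁻¹ by group] at this
  rw [inv_inv]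
  exact this

/-- op1 : conjugate the last entry by anything in the closure of the rest. -/
theorem hr_conj (p : List G) (a x : G) (hx : x ∈ Subgroup.closure {z | z ∈ p}) :
    HR (p ++ [a]) (p ++ [x * a * x⁻¹]) := by
  unfold HR
  rw [hm_append_single, hm_append_single]
  exact travel p (rinv p) hx a

theorem be_of_eq {x y : List G} (h : x = y) : BraidEquiv x y := h ▸ be_refl x

/-- op3 : the half-list braid move. -/
theorem hr_move (l₁ l₂ : List G) (a b : G) :
    HR (l₁ ++ a :: b :: l₂) (l₁ ++ (a*b*a⁻¹) :: a :: l₂) := by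
  unfold HR
  have m1 := move l₁ (l₂ ++ rinv l₂ ++ b⁻¹ :: a⁻¹ :: rinv l₁) a b
  have m2 := move (l₁ ++ (a*b*a⁻¹) :: a :: (l₂ ++ rinv l₂)) (rinv l₁) a⁻¹ ((a*b*a⁻¹)⁻¹)
  rw [show a⁻¹ * (a*b*a⁻¹)⁻¹ * a⁻¹⁻¹ = b⁻¹ by group] at m2
  have e0 : hmBracket (l₁ ++ a :: b :: l₂)
      = l₁ ++ a :: b :: (l₂ ++ rinv l₂ ++ b⁻¹ :: a⁻¹ :: rinv l₁) := by
    rw [hm_eq]; simp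
  have e1 : l₁ ++ (a*b*a⁻¹) :: a :: (l₂ ++ rinv l₂ ++ b⁻¹ :: a⁻¹ :: rinv l₁)
      = l₁ ++ (a*b*a⁻¹) :: a :: (l₂ ++ rinv l₂) ++ b⁻¹ :: a⁻¹ :: rinv l₁ := by
    simp
  have e2 : l₁ ++ (a*b*a⁻¹) :: a :: (l₂ ++ rinv l₂) ++ a⁻¹ :: (a*b*a⁻¹)⁻¹ :: rinv l₁
      = hmBracket (l₁ ++ (a*b*a⁻¹) :: a :: l₂) := by
    rw [hm_eq]; simp
  exact be_trans (be_of_eq e0) (be_trans m1 (be_trans (be_of_eq e1)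
    (be_trans (be_symm m2) (be_of_eq e2))))

/-- slide an entry to the end of the half list, conjugating what it passes. -/
theorem hr_slideEnd (a : G) : ∀ (l₂ l₁ : List G),
    HR (l₁ ++ a :: l₂) (l₁ ++ l₂.map (fun c => a*c*a⁻¹) ++ [a]) := by
  intro l₂
  induction l₂ with
  | nil => intro l₁; simpa using hr_refl (l₁ ++ [a])
  | cons b l₂ ih =>
    intro l₁
    have h1 := hr_move l₁ l₂ a b
    have h2 := ih (l₁ ++ [a*b*a⁻¹])
    refine hr_trans h1 (hr_trans (hr_trans (be_of_eq ?_) h2) (be_of_eq ?_)) <;> simp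

/-- right rotation of the half list: last entry moves to the front, unchanged. -/
theorem hr_rotR (l : List G) (a : G) : HR (l ++ [a]) (a :: l) := by
  unfold HR
  -- bracket of `a :: l` rotates (product 1)
  have hprod : (hmBracket (a :: l)).prod = 1 := hm_prod _
  have e3 : hmBracket (a :: l) = a :: (l ++ (rinv l ++ [a⁻¹])) := by
    rw [hm_eq]; simp
  have h1 : BraidEquiv (hmBracket (a :: l)) ((l ++ (rinv l ++ [a⁻¹])) ++ [a]) := by
    rw [e3]
    refine rotOne _ a ?_
    rw [← e3]; exact hprod
  -- bracket of `l ++ [a]` : slide the pair right over `rinv l`, then flip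
  have h2 : BraidEquiv (l ++ a :: a⁻¹ :: (rinv l ++ [])) (l ++ rinv l ++ a :: a⁻¹ :: []) :=
    be_symm (slideBlock [] a (rinv l) l)
  have h3 := move (l ++ rinv l) ([] : List G) a a⁻¹
  rw [show a * a⁻¹ * a⁻¹ = a⁻¹ by group] at h3
  have e1 : hmBracket (l ++ [a]) = l ++ a :: a⁻¹ :: (rinv l ++ []) := by
    rw [hm_append_single]; simp
  have e2 : l ++ rinv l ++ a⁻¹ :: a :: [] = (l ++ (rinv l ++ [a⁻¹])) ++ [a] := by simp
  exact be_trans (be_of_eq e1) (be_trans h2 (be_trans h3 (be_trans (be_of_eq e2)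
    (be_symm h1))))

/-- left rotation. -/
theorem hr_rotL (l : List G) (a : G) : HR (a :: l) (l ++ [a]) := hr_symm (hr_rotR l a)

/-! ### invariance of the Nielsen class -/

theorem nc_move {C : List (ConjClasses G)} {x y : List G} (h : BraidMove x y) :
    NielsenC C x ↔ NielsenC C y := by
  obtain ⟨l₁, l₂, a, b, rfl, rfl⟩ := h
  have hprod : (l₁ ++ a :: b :: l₂).prod = (l₁ ++ (a*b*a⁻¹) :: a :: l₂).prod := by
    simp only [List.prod_append, List.prod_cons]
    group
  have hcl : Subgroup.closure {z | z ∈ l₁ ++ a :: b :: l₂}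
      = Subgroup.closure {z | z ∈ l₁ ++ (a*b*a⁻¹) :: a :: l₂} := by
    apply le_antisymm <;> rw [Subgroup.closure_le] <;> intro z hz <;>
      simp only [Set.mem_setOf_eq, List.mem_append, List.mem_cons] at hz
    · rcases hz with hz | hz | hz | hz
      · exact Subgroup.subset_closure (by simp [hz])
      · exact Subgroup.subset_closure (by simp [hz])
      · have ha : a ∈ Subgroup.closure {z | z ∈ l₁ ++ (a*b*a⁻¹) :: a :: l₂} :=
          Subgroup.subset_closure (by simp)
        have hc : a*b*a⁻¹ ∈ Subgroup.closure {z | z ∈ l₁ ++ (a*b*a⁻¹) :: a :: l₂} :=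
          Subgroup.subset_closure (by simp)
        have hb : z = a⁻¹ * (a*b*a⁻¹) * a := by rw [hz]; group
        rw [hb]
        exact mul_mem (mul_mem (inv_mem ha) hc) ha
      · exact Subgroup.subset_closure (by simp [hz])
    · rcases hz with hz | hz | hz | hz
      · exact Subgroup.subset_closure (by simp [hz])
      · have ha : a ∈ Subgroup.closure {z | z ∈ l₁ ++ a :: b :: l₂} :=
          Subgroup.subset_closure (by simp)
        have hb : b ∈ Subgroup.closure {z | z ∈ l₁ ++ a :: b :: l₂} :=
          Subgroup.subset_closure (by simp)
        rw [hz]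
        exact mul_mem (mul_mem ha hb) (inv_mem ha)
      · exact Subgroup.subset_closure (by simp [hz])
      · exact Subgroup.subset_closure (by simp [hz])
  have hperm : ((l₁ ++ a :: b :: l₂).map ConjClasses.mk).Perm
      ((l₁ ++ (a*b*a⁻¹) :: a :: l₂).map ConjClasses.mk) := by
    simp only [List.map_append, List.map_cons]
    refine List.Perm.append_left _ ?_
    have : ConjClasses.mk (a*b*a⁻¹) = ConjClasses.mk b := by
      rw [ConjClasses.mk_eq_mk_iff_isConj]
      exact isConj_iff.mpr ⟨a⁻¹, by group⟩
    rw [this]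
    exact List.Perm.swap (ConjClasses.mk b) (ConjClasses.mk a) _
  constructor <;> rintro ⟨h1, h2, h3⟩
  · exact ⟨hprod ▸ h1, hcl ▸ h2, (hperm.symm).trans h3⟩
  · exact ⟨hprod.symm ▸ h1, hcl.symm ▸ h2, hperm.trans h3⟩

theorem nc_iff {C : List (ConjClasses G)} {x y : List G} (h : BraidEquiv x y) :
    NielsenC C x ↔ NielsenC C y := by
  induction h with
  | rel a b hab => exact nc_move hab
  | refl a => exact Iff.rfl
  | symm a b hab ih => exact ih.symm
  | trans a b c _ _ ih1 ih2 => exact ih1.trans ih2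

theorem nc_pres {C : List (ConjClasses G)} {x y : List G} (h : BraidEquiv x y)
    (hx : NielsenC C x) : NielsenC C y := (nc_iff h).mp hx

/-! ### class matching -/

theorem matching {C : List (ConjClasses G)} {k L M : List G}
    (hL : NielsenC C (hmBracket (k ++ L))) (hM : NielsenC C (hmBracket (k ++ M)))
    {m : G} (hm : m ∈ M) :
    ∃ a ∈ L, ConjClasses.mk m = ConjClasses.mk a ∨ ConjClasses.mk m = ConjClasses.mk a⁻¹ := by
  obtain ⟨-, -, pL⟩ := hL
  obtain ⟨-, -, pM⟩ := hM
  have hperm := pL.trans pM.symm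
  have hms : (↑((hmBracket (k ++ L)).map ConjClasses.mk) : Multiset (ConjClasses G))
      = ↑((hmBracket (k ++ M)).map ConjClasses.mk) := by
    exact_mod_cast Multiset.coe_eq_coe.mpr hperm
  simp only [hm_eq, rinv_append, List.map_append, ← Multiset.coe_add] at hms
  have h2 : (↑(k.map ConjClasses.mk) + ↑((rinv k).map ConjClasses.mk))
        + (↑(L.map ConjClasses.mk) + ↑((rinv L).map ConjClasses.mk))
      = (↑(k.map ConjClasses.mk) + ↑((rinv k).map ConjClasses.mk))
        + ((↑(M.map ConjClasses.mk) : Multiset (ConjClasses G))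
          + ↑((rinv M).map ConjClasses.mk)) := by
    calc (↑(k.map ConjClasses.mk) + ↑((rinv k).map ConjClasses.mk))
        + ((↑(L.map ConjClasses.mk) : Multiset (ConjClasses G))
          + ↑((rinv L).map ConjClasses.mk))
        = ↑(k.map ConjClasses.mk) + ↑(L.map ConjClasses.mk)
          + (↑((rinv L).map ConjClasses.mk) + ↑((rinv k).map ConjClasses.mk)) := by abel
      _ = ↑(k.map ConjClasses.mk) + ↑(M.map ConjClasses.mk)
          + (↑((rinv M).map ConjClasses.mk) + ↑((rinv k).map ConjClasses.mk)) := hms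
      _ = (↑(k.map ConjClasses.mk) + ↑((rinv k).map ConjClasses.mk))
          + (↑(M.map ConjClasses.mk) + ↑((rinv M).map ConjClasses.mk)) := by abel
  have key := add_left_cancel h2
  have hmem : ConjClasses.mk m ∈
      (↑(L.map ConjClasses.mk) + ↑((rinv L).map ConjClasses.mk) : Multiset (ConjClasses G)) := by
    rw [key]
    have : ConjClasses.mk m ∈ (↑(M.map ConjClasses.mk) : Multiset (ConjClasses G)) := by
      rw [Multiset.mem_coe]
      exact List.mem_map_of_mem hm
    exact Multiset.mem_add.mpr (Or.inl this)
  rcases Multiset.mem_add.mp hmem with h | h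
  · rw [Multiset.mem_coe, List.mem_map] at h
    obtain ⟨a, ha, hea⟩ := h
    exact ⟨a, ha, Or.inl hea.symm⟩
  · rw [Multiset.mem_coe, List.mem_map] at h
    obtain ⟨b, hb, heb⟩ := h
    rw [rinv, List.mem_map, ] at hb
    obtain ⟨a, ha, rfl⟩ := hb
    exact ⟨a, List.mem_reverse.mp ha, Or.inr heb.symm⟩

theorem hr_of_eq {l m : List G} (h : l = m) : HR l m := by rw [h]; exact hr_refl m

/-! ### applying the generation hypothesis -/

theorem genTop {u : ℕ} {C : List (ConjClasses G)}
    (hyp : ∀ g : Fin u → G, NielsenC C (hmBracket (List.ofFn g)) →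
      ∀ i : Fin u, Subgroup.closure (g '' {j | j ≠ i}) = ⊤)
    (p : List G) (a : G) (hlen : (p ++ [a]).length = u)
    (hnc : NielsenC C (hmBracket (p ++ [a]))) :
    Subgroup.closure {z | z ∈ p} = ⊤ := by
  have hu : p.length + 1 = u := by simpa using hlen
  have hlt : p.length < u := by omega
  set l := p ++ [a] with hl
  let g : Fin u → G := fun i => l.get (Fin.cast hlen.symm i)
  have hofn : List.ofFn g = l := by
    apply List.ext_get
    · simp [hlen]
    · intro n h1 h2
      simp [g, List.get_ofFn]
  have hg := hyp g (by rw [hofn]; exact hnc) ⟨p.length, hlt⟩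
  have himg : g '' {j | j ≠ (⟨p.length, hlt⟩ : Fin u)} = {z | z ∈ p} := by
    ext z
    constructor
    · rintro ⟨j, hj, rfl⟩
      have hne : (j : ℕ) ≠ p.length := by
        intro hc
        exact hj (Fin.ext hc)
      have hjv : (j : ℕ) < p.length := by
        have := j.isLt
        omega
      show g j ∈ p
      have : g j = l.get ⟨j, by omega⟩ := rfl
      rw [this]
      have : l.get ⟨(j:ℕ), by omega⟩ = p[(j:ℕ)]'hjv := by
        simp [hl, List.getElem_append_left, hjv]
      rw [this]
      exact List.getElem_mem _
    · intro hz
      obtain ⟨n, hn⟩ := List.mem_iff_get.mp hz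
      refine ⟨⟨(n : ℕ), by omega⟩, ?_, ?_⟩
      · intro hc
        have : (n : ℕ) = p.length := by
          have := congrArg Fin.val hc
          simpa using this
        omega
      · show g _ = z
        have : g ⟨(n:ℕ), by omega⟩ = l.get ⟨(n:ℕ), by omega⟩ := rfl
        rw [this]
        have : l.get ⟨(n:ℕ), by omega⟩ = p[(n:ℕ)]'n.isLt := by
          simp [hl, List.getElem_append_left, n.isLt]
        rw [this]
        rw [← hn]
        rfl
  rw [himg] at hg
  exact hg

/-! ### main induction -/

theorem final {u : ℕ} {C : List (ConjClasses G)} (hC : C.length = 2 * u)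
    (hyp : ∀ g : Fin u → G, NielsenC C (hmBracket (List.ofFn g)) →
      ∀ i : Fin u, Subgroup.closure (g '' {j | j ≠ i}) = ⊤) :
    ∀ (n : ℕ) (k L M : List G), L.length = n → M.length = n →
      NielsenC C (hmBracket (k ++ L)) → NielsenC C (hmBracket (k ++ M)) →
      HR (k ++ L) (k ++ M) := by
  intro n
  induction n with
  | zero =>
    intro k L M hL hM _ _
    rw [List.length_eq_zero_iff.mp hL, List.length_eq_zero_iff.mp hM]
    exact hr_refl _
  | succ n ih =>
    intro k L M hLlen hMlen hncL hncM
    have hMne : M ≠ [] := by intro h; rw [h] at hMlen; simp at hMlen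
    set m := M.getLast hMne with hm
    set B := M.dropLast with hB
    have hM' : M = B ++ [m] := (List.dropLast_append_getLast hMne).symm
    have hmm : m ∈ M := List.getLast_mem hMne
    obtain ⟨a, haL, hcase⟩ := matching hncL hncM hmm
    obtain ⟨l₁, l₂, rfl⟩ := List.append_of_mem haL
    set A := l₁ ++ l₂.map (fun c => a*c*a⁻¹) with hA
    have hAlen : A.length = n := by
      have : l₁.length + (l₂.length + 1) = n + 1 := by simpa using hLlen
      simp [hA]; omega
    -- slide a to the end
    have h1 : HR (k ++ (l₁ ++ a :: l₂)) ((k ++ A) ++ [a]) := by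
      have := hr_slideEnd a l₂ (k ++ l₁)
      exact hr_trans (hr_of_eq (by simp)) (hr_trans this (hr_of_eq (by simp [hA])))
    have hnc1 : NielsenC C (hmBracket ((k ++ A) ++ [a])) := nc_pres h1 hncL
    -- total length is u
    have hulen : ((k ++ A) ++ [a]).length = u := by
      obtain ⟨-, -, perm⟩ := hnc1
      have h1 := perm.length_eq
      rw [List.length_map] at h1
      have h2 : (hmBracket ((k ++ A) ++ [a])).length = 2 * ((k ++ A) ++ [a]).length := by
        rw [hm_eq]; simp [rinv]; ring
      omega
    -- convert a to m
    have htop : Subgroup.closure {z | z ∈ k ++ A} = ⊤ := genTop hyp (k ++ A) a hulen hnc1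
    have hmemtop : ∀ x : G, x ∈ Subgroup.closure {z | z ∈ k ++ A} := by
      intro x; rw [htop]; trivial
    have h2 : HR ((k ++ A) ++ [a]) ((k ++ A) ++ [m]) := by
      rcases hcase with hc | hc
      · have : IsConj a m := ConjClasses.mk_eq_mk_iff_isConj.mp hc.symm
        obtain ⟨x, hx⟩ := isConj_iff.mp this
        have := hr_conj (k ++ A) a x (hmemtop x)
        rwa [hx] at this
      · have : IsConj a⁻¹ m := ConjClasses.mk_eq_mk_iff_isConj.mp hc.symm
        obtain ⟨x, hx⟩ := isConj_iff.mp this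
        have hflip := hr_flip (k ++ A) a
        have hconj := hr_conj (k ++ A) a⁻¹ x (hmemtop x)
        rw [hx] at hconj
        exact hr_trans hflip hconj
    -- rotate m to the front
    have h3 : HR ((k ++ A) ++ [m]) ((m :: k) ++ A) := by
      have := hr_rotR (k ++ A) m
      exact hr_trans this (hr_of_eq (by simp))
    -- M side
    have h4 : HR (k ++ M) ((m :: k) ++ B) := by
      have e : k ++ M = (k ++ B) ++ [m] := by rw [hM']; simp
      have := hr_rotR (k ++ B) m
      exact hr_trans (hr_of_eq e) (hr_trans this (hr_of_eq (by simp)))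
    have hBlen : B.length = n := by rw [hB, List.length_dropLast]; omega
    have hncA : NielsenC C (hmBracket ((m :: k) ++ A)) :=
      nc_pres (hr_trans h2 h3) hnc1
    have hncB : NielsenC C (hmBracket ((m :: k) ++ B)) := nc_pres h4 hncM
    have hIH := ih (m :: k) A B hAlen hBlen hncA hncB
    exact hr_trans (hr_trans (hr_trans h1 h2) h3) (hr_trans hIH (hr_symm h4))

end BraidAux

/-- **Generator Lemma, second part.** Suppose that for every `[g_1,…,g_u] ∈ ni(G,C)`
and every `i`, the entries other than `g_i` already generate `G`. Then all H-M
representatives of `ni(G,C)` fall in one braid orbit. -/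
theorem generator_lemma_second {G : Type*} [Group G] [Finite G] (u : ℕ)
    (C : List (ConjClasses G)) (hC : C.length = 2 * u)
    (hyp : ∀ g : Fin u → G, NielsenC C (hmBracket (List.ofFn g)) →
      ∀ i : Fin u, Subgroup.closure (g '' {j | j ≠ i}) = ⊤) :
    ∀ g h : Fin u → G,
      NielsenC C (hmBracket (List.ofFn g)) →
      NielsenC C (hmBracket (List.ofFn h)) →
      BraidEquiv (hmBracket (List.ofFn g)) (hmBracket (List.ofFn h)) := by
  intro g h hg hh
  have := BraidAux.final hC hyp u [] (List.ofFn g) (List.ofFn h)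
    (by simp) (by simp) (by simpa using hg) (by simpa using hh)
  simpa [BraidAux.HR] using this
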